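/- Let α, β be real numbers and let i < j be integers in [0,5] with j − i = 2. Then α·x^i + β·x^j ∈ ℤ[x] if and only if there exist integers α₁, α₂, β₁, β₂ such that α = (α₁ + α₂√3)/√3, β = (β₁ + β₂√3)/√3, and α₁ − β₁ is divisible by 3. -/

import Mathlib

/-- `x = exp(πi/6)`, a primitive 12th root of unity. -/
noncomputable def x : ℂ := Complex.exp (Real.pi * Complex.I / 6)
/-- `ℤ[x]`: the additive subgroup of `ℂ` generated by `x^k`, `0 ≤ k ≤ 5`. -/
def Zx : Set ℂ := {z | ∃ n : Fin 6 → ℤ, z = ∑ k : Fin 6, (n k : ℂ) * x ^ (k : ℕ)}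

lemma hx : x = (Real.sqrt 3 / 2 : ℝ) + Complex.I / 2 := by
  rw [x]
  have h : (Real.pi : ℂ) * Complex.I / 6 = ((Real.pi/6 : ℝ) : ℂ) * Complex.I := by push_cast; ring
  rw [h, Complex.exp_mul_I, ← Complex.ofReal_cos, ← Complex.ofReal_sin,
    Real.cos_pi_div_six, Real.sin_pi_div_six]
  push_cast; ring

lemma hs : Real.sqrt 3 ^ 2 = 3 := Real.sq_sqrt (by norm_num)
lemma sC : ((Real.sqrt 3 : ℝ) : ℂ) ^ 2 = 3 := by exact_mod_cast congrArg Complex.ofReal hs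
lemma hx0 : x ≠ 0 := Complex.exp_ne_zero _
lemma hx6 : x ^ 6 = -1 := by
  rw [x, ← Complex.exp_nat_mul]
  have h : (6:ℕ) * ((Real.pi:ℂ) * Complex.I / 6) = Real.pi * Complex.I := by push_cast; ring
  rw [h, Complex.exp_pi_mul_I]

lemma e1 : x ^ 1 = (Real.sqrt 3 : ℂ)/2 + Complex.I/2 := by rw [pow_one, hx]; push_cast; ring
lemma e2 : x ^ 2 = (1/2 : ℂ) + (Real.sqrt 3 : ℂ)/2 * Complex.I := by
  rw [pow_two, hx]; push_cast
  linear_combination (1/4 : ℂ) * sC + (1/4 : ℂ) * Complex.I_sq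
lemma e3 : x ^ 3 = Complex.I := by
  rw [pow_succ, e2, hx]; push_cast
  linear_combination (Complex.I/4) * sC + (((Real.sqrt 3:ℝ):ℂ)/4) * Complex.I_sq
lemma e4 : x ^ 4 = -(1/2 : ℂ) + (Real.sqrt 3 : ℂ)/2 * Complex.I := by
  rw [pow_succ, e3, hx]; push_cast
  linear_combination (1/2 : ℂ) * Complex.I_sq
lemma e5 : x ^ 5 = -((Real.sqrt 3 : ℂ)/2) + Complex.I/2 := by
  rw [pow_succ, e4, hx]; push_cast
  linear_combination (Complex.I/4) * sC + (((Real.sqrt 3:ℝ):ℂ)/4) * Complex.I_sq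

lemma sum6 (m : Fin 6 → ℤ) : (∑ k : Fin 6, (m k : ℂ) * x ^ (k : ℕ)) =
    (m 0 : ℂ) * x ^ (0:ℕ) + (m 1 : ℂ) * x ^ (1:ℕ) + (m 2 : ℂ) * x ^ (2:ℕ) +
    (m 3 : ℂ) * x ^ (3:ℕ) + (m 4 : ℂ) * x ^ (4:ℕ) + (m 5 : ℂ) * x ^ (5:ℕ) := by
  rw [Fin.sum_univ_six]; rfl

lemma vec6_5 (a b c d e f : ℤ) : ![a,b,c,d,e,f] 5 = f := rfl

lemma mem_x_mul (z : ℂ) : x * z ∈ Zx ↔ z ∈ Zx := by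
  constructor
  · rintro ⟨n, hn⟩
    refine ⟨![n 1, n 2, n 3, n 4, n 5, -(n 0)], mul_left_cancel₀ hx0 ?_⟩
    rw [sum6] at hn ⊢
    simp only [Matrix.cons_val_zero, Matrix.cons_val_one, Matrix.head_cons,
      Matrix.cons_val_two, Matrix.tail_cons, Matrix.cons_val_three, Matrix.cons_val_four,
      Matrix.cons_val_fin_one, vec6_5]
    push_cast
    linear_combination hn + (n 0 : ℂ) * hx6
  · rintro ⟨n, hn⟩
    refine ⟨![-(n 5), n 0, n 1, n 2, n 3, n 4], ?_⟩
    rw [sum6] at hn ⊢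
    simp only [Matrix.cons_val_zero, Matrix.cons_val_one, Matrix.head_cons,
      Matrix.cons_val_two, Matrix.tail_cons, Matrix.cons_val_three, Matrix.cons_val_four,
      Matrix.cons_val_fin_one, vec6_5]
    push_cast
    linear_combination x * hn + (n 5 : ℂ) * hx6

lemma mem_x_pow_mul (i : ℕ) (z : ℂ) : x ^ i * z ∈ Zx ↔ z ∈ Zx := by
  induction i generalizing z with
  | zero => simp
  | succ k ih =>
    have h : x ^ (k+1) * z = x ^ k * (x * z) := by ring
    rw [h, ih, mem_x_mul]

lemma core (α β : ℝ) : (α : ℂ) + (β : ℂ) * x ^ 2 ∈ Zx ↔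
    ∃ α₁ α₂ β₁ β₂ : ℤ,
        α = (α₁ + α₂ * Real.sqrt 3) / Real.sqrt 3 ∧
        β = (β₁ + β₂ * Real.sqrt 3) / Real.sqrt 3 ∧
        (3 : ℤ) ∣ (α₁ - β₁) := by
  have hs0 : Real.sqrt 3 ≠ 0 := by positivity
  constructor
  · rintro ⟨n, h⟩
    rw [sum6, pow_zero, e1, e2, e3, e4, e5] at h
    have h1 := congrArg Complex.re h
    have h2 := congrArg Complex.im h
    simp [Complex.add_re, Complex.add_im, Complex.mul_re, Complex.mul_im] at h1 h2
    refine ⟨n 1 - n 3 - 2 * n 5, n 0 - n 4, n 1 + n 5 + 2 * n 3, n 2 + n 4, ?_, ?_,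
      ⟨-(n 3 + n 5), by ring⟩⟩
    · field_simp
      push_cast
      linear_combination Real.sqrt 3 * h1 - h2 + ((n 1 : ℝ)/2 - (n 5 : ℝ)/2) * hs
    · field_simp
      push_cast
      linear_combination 2 * h2
  · rintro ⟨α₁, α₂, β₁, β₂, hα, hβ, c, hc⟩
    obtain rfl : β₁ = α₁ - 3*c := by omega
    refine ⟨![α₂, α₁ - c, β₂, -c, 0, 0], ?_⟩
    rw [sum6]
    simp only [Matrix.cons_val_zero, Matrix.cons_val_one, Matrix.head_cons,
      Matrix.cons_val_two, Matrix.tail_cons, Matrix.cons_val_three, Matrix.cons_val_four,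
      Matrix.cons_val_fin_one, vec6_5]
    rw [pow_zero, e1, e2, e3, e4, e5, hα, hβ]
    have hsC0 : ((Real.sqrt 3 : ℝ) : ℂ) ≠ 0 := by exact_mod_cast hs0
    push_cast
    field_simp
    linear_combination (-((α₁:ℂ) - c)) * sC

theorem stmt4 (α β : ℝ) (i j : ℕ) (hj : j ≤ 5) (hij : i < j) (hd : j - i = 2) :
    (α : ℂ) * x ^ i + (β : ℂ) * x ^ j ∈ Zx ↔
      ∃ α₁ α₂ β₁ β₂ : ℤ,
        α = (α₁ + α₂ * Real.sqrt 3) / Real.sqrt 3 ∧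
        β = (β₁ + β₂ * Real.sqrt 3) / Real.sqrt 3 ∧
        (3 : ℤ) ∣ (α₁ - β₁) := by
  obtain rfl : j = i + 2 := by omega
  have h : (α : ℂ) * x ^ i + (β : ℂ) * x ^ (i + 2) = x ^ i * ((α : ℂ) + (β : ℂ) * x ^ 2) := by
    ring
  rw [h, mem_x_pow_mul, core]
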